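/- Let α = {B_1^{p_1},…,B_l^{p_l}} ∈ Π_n^• with min B_1 < … < min B_l, and define Φ from the principal upper filter U(α) = {π : π ≥ α} to the pointed partition poset Π^•_{{min B_1,…,min B_l}} by sending each pointed block A^q with A = B_{j_1}∪…∪B_{j_r} (j_1<…<j_r) and q = p_{j_s} to the pointed block {min B_{j_1},…,min B_{j_r}} pointed at min B_{j_s}, and sending π to the set of images of its pointed blocks. Then Φ is a poset isomorphism from U(α) onto Π^•_{{min B_1,…,min B_l}} which preserves the labeling λ_•: for every cover π ⋖ π′ in U(α), λ_•(Φ(π) ⋖ Φ(π′)) = λ_•(π ⋖ π′). -/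

import Mathlib

open Finset

open scoped BigOperators Classical

/-! ## Generic machinery for edge labelings of posets presented by cover relations -/

section Chains

variable {α : Type*} {L : Type*}

/-- The word of labels read along a list of poset elements. -/
def wordOf (lab : α → α → L) : List α → List L
  | x :: y :: rest => lab x y :: wordOf lab (y :: rest)
  | _ => []

/-- `c` is a saturated chain from `x` to `y` with respect to the cover relation `cov`;
in a graded poset these are exactly the maximal chains of the interval `[x, y]`. -/
def IsSatChain (cov : α → α → Prop) (x y : α) (c : List α) : Prop :=
  c.Chain' cov ∧ c.head? = some x ∧ c.getLast? = some y

/-- A word of labels is increasing if consecutive labels strictly increase. -/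
def IncWord (lt : L → L → Prop) (w : List L) : Prop := w.Chain' lt

/-- A word of labels is ascent-free if no consecutive pair of labels strictly increases. -/
def AscFree (lt : L → L → Prop) (w : List L) : Prop := w.Chain' fun a b => ¬ lt a b

/-- The partial order generated by a cover relation. -/
def leOf (cov : α → α → Prop) : α → α → Prop := Relation.ReflTransGen cov

/-- The strict order generated by a cover relation. -/
def ltOf (cov : α → α → Prop) (a b : α) : Prop := leOf cov a b ∧ a ≠ b

/-- An ER-labeling: every closed interval has a unique increasing maximal chain. -/
def IsERLabeling (cov : α → α → Prop) (lab : α → α → L) (lt : L → L → Prop) : Prop :=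
  ∀ x y, leOf cov x y → ∃! c, IsSatChain cov x y c ∧ IncWord lt (wordOf lab c)

/-- The rank two switching property: in every rank-two interval whose increasing chain
has word of labels `ab`, there is a unique chain with word of labels `ba`. -/
def RankTwoSwitch (cov : α → α → Prop) (lab : α → α → L) (lt : L → L → Prop) : Prop :=
  ∀ x y c a b, IsSatChain cov x y c → IncWord lt (wordOf lab c) → wordOf lab c = [a, b] →
    ∃! c', IsSatChain cov x y c' ∧ wordOf lab c' = [b, a]

/-- In every interval, distinct ascent-free maximal chains have distinct label words. -/
def AscFreeInj (cov : α → α → Prop) (lab : α → α → L) (lt : L → L → Prop) : Prop :=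
  ∀ x y c c', IsSatChain cov x y c → IsSatChain cov x y c' →
    AscFree lt (wordOf lab c) → AscFree lt (wordOf lab c') →
    wordOf lab c = wordOf lab c' → c = c'

/-- An EW-labeling. -/
def IsEWLabeling (cov : α → α → Prop) (lab : α → α → L) (lt : L → L → Prop) : Prop :=
  IsERLabeling cov lab lt ∧ RankTwoSwitch cov lab lt ∧ AscFreeInj cov lab lt

/-- An EL-labeling: every closed interval has a unique increasing maximal chain,
which lexicographically precedes every other maximal chain of the interval. -/
def IsELLabeling (cov : α → α → Prop) (lab : α → α → L) (lt : L → L → Prop) : Prop :=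
  ∀ x y, leOf cov x y →
    ∃ c, (IsSatChain cov x y c ∧ IncWord lt (wordOf lab c)) ∧
      ∀ c', IsSatChain cov x y c' → c' ≠ c →
        ¬ IncWord lt (wordOf lab c') ∧ List.Lex lt (wordOf lab c) (wordOf lab c')

end Chains

/-! ## Möbius functions and Whitney numbers -/

section Whitney

variable {α : Type*} {β : Type*}

/-- Auxiliary Möbius function computed with fuel; for an element of rank `k` of a
graded poset, fuel `k` computes the one-variable Möbius function `μ(0̂, ·)`. -/
noncomputable def muAux (ltr : α → α → Prop) (bot : α) : ℕ → α → ℤ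
  | 0, x => if x = bot then 1 else 0
  | k + 1, x => if x = bot then 1 else - ∑ᶠ (y : α) (_ : ltr y x), muAux ltr bot k y

/-- The one-variable Möbius function `μ(0̂, x)` of a graded poset presented by its
cover relation `cov`, minimum `bot` and rank function `rk`. -/
noncomputable def muBot (cov : α → α → Prop) (bot : α) (rk : α → ℕ) (x : α) : ℤ :=
  muAux (ltOf cov) bot (rk x) x

/-- The `k`-th Whitney number of the first kind. -/
noncomputable def whitney1 (cov : α → α → Prop) (bot : α) (rk : α → ℕ) (k : ℕ) : ℤ :=
  ∑ᶠ (x : α) (_ : rk x = k), muBot cov bot rk x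

/-- The `k`-th Whitney number of the second kind. -/
noncomputable def whitney2 (rk : α → ℕ) (k : ℕ) : ℕ :=
  Nat.card {x : α // rk x = k}

/-- Two graded posets are Whitney duals if their Whitney numbers of the first and second
kind are swapped (up to sign). -/
def IsWhitneyDual (covP : α → α → Prop) (botP : α) (rkP : α → ℕ)
    (covQ : β → β → Prop) (botQ : β) (rkQ : β → ℕ) : Prop :=
  ∀ k, (whitney1 covP botP rkP k).natAbs = whitney2 rkQ k ∧
       (whitney1 covQ botQ rkQ k).natAbs = whitney2 rkP k

/-- Two graded posets are Whitney twins if they have the same Whitney numbers of the first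
and of the second kind. -/
def IsWhitneyTwin (covP : α → α → Prop) (botP : α) (rkP : α → ℕ)
    (covQ : β → β → Prop) (botQ : β) (rkQ : β → ℕ) : Prop :=
  ∀ k, whitney1 covP botP rkP k = whitney1 covQ botQ rkQ k ∧ whitney2 rkP k = whitney2 rkQ k

/-- `(cov, bot, rk)` presents a graded poset with minimum `bot`. -/
def IsGradedPoset (cov : α → α → Prop) (bot : α) (rk : α → ℕ) : Prop :=
  (∀ x, leOf cov bot x) ∧ rk bot = 0 ∧ ∀ x y, cov x y → rk y = rk x + 1

/-- A graded poset has a Whitney dual. -/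
def HasWhitneyDual {γ : Type} (cov : γ → γ → Prop) (bot : γ) (rk : γ → ℕ) : Prop :=
  ∃ (β : Type) (_ : Finite β) (covQ : β → β → Prop) (botQ : β) (rkQ : β → ℕ),
    IsGradedPoset covQ botQ rkQ ∧ IsWhitneyDual cov bot rk covQ botQ rkQ

/-- Isomorphism of the posets generated by two cover relations. -/
def CovPosetIso (covP : α → α → Prop) (covQ : β → β → Prop) : Prop :=
  ∃ e : α ≃ β, ∀ x y, leOf covP x y ↔ leOf covQ (e x) (e y)

end Whitney

/-! ## The label posets `Λₙʷ` and `Λₙ•` (strict order relations)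

Labels are triples `(a, b, u)` with `a < b` in `[n]` and `u ∈ {0,1}` (encoded as `Bool`). -/

/-- The strict order of `Λₙʷ = Γ₁ ⊕ ⋯ ⊕ Γ_{n-1}` where `Γ_a` carries the product order
`(a,b)ᵘ ≤ (a,c)ᵛ ↔ b ≤ c ∧ u ≤ v`. -/
def ltLw (x y : ℕ × ℕ × Bool) : Prop :=
  x.1 < y.1 ∨ (x.1 = y.1 ∧ x.2.1 ≤ y.2.1 ∧ x.2.2 ≤ y.2.2 ∧ x.2 ≠ y.2)

/-- The strict order of `Λₙ• = A₁ ⊕ C₁ ⊕ ⋯ ⊕ A_{n-1} ⊕ C_{n-1}` where `A_a` is the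
antichain of the `(a,b)⁰` and `C_a` is the chain of the `(a,b)¹` ordered by `b`. -/
def ltLp (x y : ℕ × ℕ × Bool) : Prop :=
  x.1 < y.1 ∨ (x.1 = y.1 ∧
    ((x.2.2 = false ∧ y.2.2 = true) ∨ (x.2.2 = true ∧ y.2.2 = true ∧ x.2.1 < y.2.1)))

/-! ## Pointed and weighted partition posets -/

/-- The minimum of a finite set of naturals (`0` for the empty set). -/
def minB (B : Finset ℕ) : ℕ := B.min.untopD 0

/-- Pointed partitions of the ground set `A`: partitions of `A` into blocks, each block
carrying a distinguished (pointed) element.  A pointed block is a pair `(B, p)` with `p ∈ B`. -/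
abbrev PPart (A : Finset ℕ) : Type :=
  {π : Finset (Finset ℕ × ℕ) //
    (∀ b ∈ π, b.2 ∈ b.1) ∧
    (∀ b ∈ π, ∀ b' ∈ π, b ≠ b' → Disjoint b.1 b'.1) ∧
    π.biUnion Prod.fst = A}

/-- The cover relation of the pointed partition poset: merge two pointed blocks, the merged
block being pointed at the pointed element of one of the two. -/
def covPP {A : Finset ℕ} (π π' : PPart A) : Prop :=
  ∃ b1 ∈ π.1, ∃ b2 ∈ π.1, minB b1.1 < minB b2.1 ∧
    ∃ p : ℕ, (p = b1.2 ∨ p = b2.2) ∧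
      π'.1 = insert (b1.1 ∪ b2.1, p) ((π.1.erase b1).erase b2)

/-- The labeling `λ•` (as a bare label map): the cover `u`-merging blocks `A, B` with
`min A < min B` gets the label `(min A, min B, u)`, where `u = 1` exactly when the merged
block is pointed at the pointed element of `A`. -/
noncomputable def labPP {A : Finset ℕ} (π π' : PPart A) : ℕ × ℕ × Bool :=
  let olds := π.1 \ π'.1
  let mins := olds.image (fun b => minB b.1)
  (mins.min.untopD 0, mins.max.unbotD 0,
    if ∃ b ∈ olds, minB b.1 = mins.min.untopD 0 ∧ ∃ d ∈ π'.1 \ π.1, d.2 = b.2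
      then true else false)

/-- The minimum of the pointed partition poset: all blocks are pointed singletons. -/
def botPP (A : Finset ℕ) : PPart A :=
  ⟨A.image fun i => ({i}, i), by
    refine ⟨?_, ?_, ?_⟩
    · intro b hb
      obtain ⟨i, -, rfl⟩ := Finset.mem_image.1 hb
      exact Finset.mem_singleton_self i
    · intro b hb b' hb' hne
      obtain ⟨i, -, rfl⟩ := Finset.mem_image.1 hb
      obtain ⟨j, -, rfl⟩ := Finset.mem_image.1 hb'
      have hij : i ≠ j := fun h => hne (by rw [h])
      simp [Finset.disjoint_left, hij]
    · ext x
      simp⟩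

/-- The rank function of the pointed partition poset. -/
def rkPP {A : Finset ℕ} (π : PPart A) : ℕ := A.card - π.1.card

/-- Weighted partitions of the ground set `A`: partitions of `A` into blocks, each block `B`
carrying a weight `v` with `0 ≤ v ≤ |B| - 1`. -/
abbrev WPart (A : Finset ℕ) : Type :=
  {π : Finset (Finset ℕ × ℕ) //
    (∀ b ∈ π, b.2 < b.1.card) ∧
    (∀ b ∈ π, ∀ b' ∈ π, b ≠ b' → Disjoint b.1 b'.1) ∧
    π.biUnion Prod.fst = A}

/-- The cover relation of the weighted partition poset: merge blocks `A^v, B^w` into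
`(A ∪ B)^(v+w+u)` for some `u ∈ {0,1}`. -/
def covWP {A : Finset ℕ} (π π' : WPart A) : Prop :=
  ∃ b1 ∈ π.1, ∃ b2 ∈ π.1, minB b1.1 < minB b2.1 ∧ ∃ u : Bool,
    π'.1 = insert (b1.1 ∪ b2.1, b1.2 + b2.2 + (if u then 1 else 0)) ((π.1.erase b1).erase b2)

/-- The labeling `λ_w` (as a bare label map): the cover merging `A^v, B^w` with
`min A < min B` into `(A ∪ B)^(v+w+u)` gets the label `(min A, min B, u)`. -/
noncomputable def labWP {A : Finset ℕ} (π π' : WPart A) : ℕ × ℕ × Bool :=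
  let olds := π.1 \ π'.1
  let mins := olds.image (fun b => minB b.1)
  (mins.min.untopD 0, mins.max.unbotD 0,
    if (π'.1 \ π.1).sum Prod.snd = olds.sum Prod.snd + 1 then true else false)

/-- The minimum of the weighted partition poset: all blocks singletons of weight `0`. -/
def botWP (A : Finset ℕ) : WPart A :=
  ⟨A.image fun i => ({i}, 0), by
    refine ⟨?_, ?_, ?_⟩
    · intro b hb
      obtain ⟨i, -, rfl⟩ := Finset.mem_image.1 hb
      simp
    · intro b hb b' hb' hne
      obtain ⟨i, -, rfl⟩ := Finset.mem_image.1 hb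
      obtain ⟨j, -, rfl⟩ := Finset.mem_image.1 hb'
      have hij : i ≠ j := fun h => hne (by rw [h])
      simp [Finset.disjoint_left, hij]
    · ext x
      simp⟩

/-- The rank function of the weighted partition poset. -/
def rkWP {A : Finset ℕ} (π : WPart A) : ℕ := A.card - π.1.card
/-! ## Bicolored binary trees and Lyndon forests -/

/-- Planar binary trees with `ℕ`-labeled leaves and `Bool`-colored internal vertices
(`false` = color 0, `true` = color 1). -/
inductive BT : Type
  | leaf : ℕ → BT
  | node : Bool → BT → BT → BT
deriving DecidableEq

namespace BT

/-- The valency: the minimum leaf label of a tree. -/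
def nu : BT → ℕ
  | leaf a => a
  | node _ l r => min l.nu r.nu

/-- The set of leaf labels of a tree. -/
def leaves : BT → Finset ℕ
  | leaf a => {a}
  | node _ l r => l.leaves ∪ r.leaves

/-- The number of internal vertices of a tree. -/
def internals : BT → ℕ
  | leaf _ => 0
  | node _ l r => l.internals + r.internals + 1

/-- A tree is normalized if its leaf labels are distinct and every internal vertex has the
same valency as its left child. -/
def normalized : BT → Prop
  | leaf _ => True
  | node _ l r => l.normalized ∧ r.normalized ∧ Disjoint l.leaves r.leaves ∧ l.nu < r.nu

/-- The pointed Lyndon condition: at every internal vertex `v` with internal left child,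
`color (L v) ≥ color v`, and if `color (L v) = color v = 1` then `v` is a Lyndon vertex,
i.e. `ν (R (L v)) > ν (R v)`. -/
def pLyn : BT → Prop
  | leaf _ => True
  | node c l r => l.pLyn ∧ r.pLyn ∧
      (match l with
       | leaf _ => True
       | node c' _ r' => c ≤ c' ∧ ((c' = c ∧ c = true) → r.nu < r'.nu))

/-- The bicolored Lyndon condition: every internal vertex with internal left child is
Lyndon (`ν (R (L v)) > ν (R v)`) or satisfies `color (L v) > color v`. -/
def wLyn : BT → Prop
  | leaf _ => True
  | node c l r => l.wLyn ∧ r.wLyn ∧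
      (match l with
       | leaf _ => True
       | node c' _ r' => r.nu < r'.nu ∨ c < c')

/-- The pointed element of a bicolored tree: a `1`-colored vertex keeps the point of its
left subtree and a `0`-colored vertex keeps the point of its right subtree. -/
def ppt : BT → ℕ
  | leaf a => a
  | node c l r => if c then l.ppt else r.ppt

end BT

/-- `u`-merging of two pointed Lyndon trees: create a new root of color `u` with the two
trees as subtrees, then repeatedly slide the new vertex together with its right subtree
past its left child until the pointed Lyndon condition holds at the new vertex. -/
def mergeP (u : Bool) : BT → BT → BT
  | BT.leaf a, t2 => BT.node u (BT.leaf a) t2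
  | BT.node c a b, t2 =>
      if u ≤ c ∧ ((c = true ∧ u = true) → t2.nu < b.nu)
      then BT.node u (BT.node c a b) t2
      else BT.node c (mergeP u a t2) b

/-- `u`-merging of two bicolored Lyndon trees: create a new root of color `u` with the two
trees as subtrees, then repeatedly slide the new vertex together with its right subtree
past its left child until the bicolored Lyndon condition holds at the new vertex. -/
def mergeW (u : Bool) : BT → BT → BT
  | BT.leaf a, t2 => BT.node u (BT.leaf a) t2
  | BT.node c a b, t2 =>
      if t2.nu < b.nu ∨ u < c
      then BT.node u (BT.node c a b) t2
      else BT.node c (mergeW u a t2) b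

/-- A valid forest on the ground set `[n]`, each tree normalized and satisfying `P`, the
trees having pairwise disjoint leaf sets which together cover `[n] = {1, …, n}`. -/
def ForestValid (n : ℕ) (P : BT → Prop) (F : Finset BT) : Prop :=
  (∀ t ∈ F, t.normalized ∧ P t) ∧
  (∀ t ∈ F, ∀ t' ∈ F, t ≠ t' → Disjoint t.leaves t'.leaves) ∧
  F.biUnion BT.leaves = Finset.Icc 1 n

/-- The set of pointed Lyndon forests on `[n]`. -/
abbrev FLynP (n : ℕ) : Type := {F : Finset BT // ForestValid n BT.pLyn F}

/-- The set of bicolored Lyndon forests on `[n]`. -/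
abbrev FLynW (n : ℕ) : Type := {F : Finset BT // ForestValid n BT.wLyn F}

/-- The cover relation on forests: `u`-merge two of the trees (the one with smaller minimum
leaf label going to the left). -/
def covForest (merge : Bool → BT → BT → BT) (F F' : Finset BT) : Prop :=
  ∃ t1 ∈ F, ∃ t2 ∈ F, t1.nu < t2.nu ∧ ∃ u : Bool,
    F' = insert (merge u t1 t2) ((F.erase t1).erase t2)

/-- The cover relation of the poset of pointed Lyndon forests `FLyn_n^•`. -/
def covFP {n : ℕ} (F F' : FLynP n) : Prop := covForest mergeP F.1 F'.1

/-- The cover relation of the poset of bicolored Lyndon forests `FLyn_n^w`. -/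
def covFW {n : ℕ} (F F' : FLynW n) : Prop := covForest mergeW F.1 F'.1

/-- The forest of `n` isolated leaves. -/
def botForest (n : ℕ) : Finset BT := (Finset.Icc 1 n).image BT.leaf

theorem botForest_valid (n : ℕ) (P : BT → Prop) (hP : ∀ a, P (BT.leaf a)) :
    ForestValid n P (botForest n) := by
  refine ⟨?_, ?_, ?_⟩
  · intro t ht
    obtain ⟨i, -, rfl⟩ := Finset.mem_image.1 ht
    exact ⟨trivial, hP i⟩
  · intro t ht t' ht' hne
    obtain ⟨i, -, rfl⟩ := Finset.mem_image.1 ht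
    obtain ⟨j, -, rfl⟩ := Finset.mem_image.1 ht'
    have hij : i ≠ j := fun h => hne (by rw [h])
    simp only [BT.leaves]
    simp [Finset.disjoint_left, hij]
  · ext x
    simp [botForest, BT.leaves]

/-- The minimum of the poset of pointed Lyndon forests. -/
def botFP (n : ℕ) : FLynP n := ⟨botForest n, botForest_valid n _ fun _ => trivial⟩

/-- The minimum of the poset of bicolored Lyndon forests. -/
def botFW (n : ℕ) : FLynW n := ⟨botForest n, botForest_valid n _ fun _ => trivial⟩

/-- The rank of a forest: its total number of internal vertices. -/
def rkForest (F : Finset BT) : ℕ := F.sum BT.internals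

/-- The rank function of `FLyn_n^•`. -/
def rkFP {n : ℕ} (F : FLynP n) : ℕ := rkForest F.1

/-- The rank function of `FLyn_n^w`. -/
def rkFW {n : ℕ} (F : FLynW n) : ℕ := rkForest F.1

/-! ## The Whitney dual construction `R_λ(P)` -/

section RPoset

variable {α : Type*} {L : Type*}

/-- Swap the leftmost ascent of a word of labels. -/
noncomputable def swapFirstAscent (lt : L → L → Prop) : List L → List L
  | a :: b :: rest => if lt a b then b :: a :: rest else a :: swapFirstAscent lt (b :: rest)
  | w => w

/-- Sort a word of labels by repeatedly swapping its leftmost ascent until it is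
ascent-free. -/
noncomputable def sortWord (lt : L → L → Prop) (w : List L) : List L :=
  (swapFirstAscent lt)^[w.length * w.length] w

/-- The underlying set of the Whitney dual `R_λ(P)`: pairs `(x, w)` where `w` is the label
word of an ascent-free saturated chain from `0̂` to `x`. -/
abbrev RPoset (cov : α → α → Prop) (lab : α → α → L) (lt : L → L → Prop) (bot : α) : Type _ :=
  {q : α × List L //
    ∃ c, IsSatChain cov bot q.1 c ∧ AscFree lt (wordOf lab c) ∧ wordOf lab c = q.2}

/-- The cover relation of `R_λ(P)`: `(x, w) ⋖ (y, u)` iff `x ⋖ y` and `u` is obtained by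
sorting the label of `x ⋖ y` into `w`. -/
def covR (cov : α → α → Prop) (lab : α → α → L) (lt : L → L → Prop) (bot : α)
    (p q : RPoset cov lab lt bot) : Prop :=
  cov p.1.1 q.1.1 ∧ q.1.2 = sortWord lt (p.1.2 ++ [lab p.1.1 q.1.1])

end RPoset

/-! ## Reiner's poset of rooted spanning forests -/

/-- A rooted spanning forest on `[n]`, encoded by its parent function: `f i` is the parent
of the vertex `i` (`f i = i` for roots), vertices outside `[n]` being fixed, and every
vertex reaching a root after finitely many steps (acyclicity). -/
def SFvalid (n : ℕ) (f : ℕ → ℕ) : Prop :=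
  (∀ i ∈ Finset.Icc 1 n, f i ∈ Finset.Icc 1 n) ∧
  (∀ i, i ∉ Finset.Icc 1 n → f i = i) ∧
  (∀ i, ∃ k, f^[k + 1] i = f^[k] i)

/-- Reiner's poset `SF_n` of rooted spanning forests of the complete graph on `[n]`. -/
abbrev SF (n : ℕ) : Type := {f : ℕ → ℕ // SFvalid n f}

/-- The cover relation of `SF_n`: add an edge between the roots of two trees, one of the
two roots becoming the root of the merged tree. -/
def covSF {n : ℕ} (f g : SF n) : Prop :=
  ∃ r1 ∈ Finset.Icc 1 n, ∃ r2 ∈ Finset.Icc 1 n, r1 ≠ r2 ∧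
    f.1 r1 = r1 ∧ f.1 r2 = r2 ∧
    (g.1 = Function.update f.1 r1 r2 ∨ g.1 = Function.update f.1 r2 r1)

/-- The rank of a rooted spanning forest: its number of edges. -/
def rkSF {n : ℕ} (f : SF n) : ℕ := ((Finset.Icc 1 n).filter fun i => f.1 i ≠ i).card
/-! ## Further constructions used in particular statements -/

/-- The map `Φ` on underlying finsets: a pointed block `(B, q)` of a pointed partition
above `α` is sent to the set of minima of the `α`-blocks contained in `B`, pointed at the
minimum of the `α`-block containing `q`. -/
noncomputable def PhiMap (af : Finset (Finset ℕ × ℕ)) (pf : Finset (Finset ℕ × ℕ)) :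
    Finset (Finset ℕ × ℕ) :=
  pf.image fun b =>
    ((af.filter fun c => c.1 ⊆ b.1).image fun c => minB c.1,
     ((af.filter fun c => b.2 ∈ c.1).image fun c => minB c.1).min.untopD 0)

/-- The expected word of labels of the unique increasing maximal chain of the interval
`[0̂, [n]^p]` of the pointed partition poset:
`(1,2)¹ ⋯ (1,n)¹` if `p = 1`, and `(1,p)⁰ (1,2)¹ ⋯ (1,p-1)¹ (1,p+1)¹ ⋯ (1,n)¹` otherwise. -/
def expectedWordP (n p : ℕ) : List (ℕ × ℕ × Bool) :=
  let base := (List.range (n - 1)).map fun i => ((1 : ℕ), i + 2, true)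
  if p = 1 then base else ((1 : ℕ), p, false) :: base.erase (1, p, true)

/-- Merge two words of labels, each with non-increasing first components, into a single
word with non-increasing first components. -/
def mergeByNu : List (ℕ × ℕ × Bool) → List (ℕ × ℕ × Bool) → List (ℕ × ℕ × Bool)
  | [], ys => ys
  | xs, [] => xs
  | x :: xs, y :: ys =>
      if y.1 ≤ x.1 then x :: mergeByNu xs (y :: ys) else y :: mergeByNu (x :: xs) ys
termination_by xs ys => xs.length + ys.length

/-- The word of labels of a tree read along the reverse-minimal linear extension of its
internal vertices: the internal vertex `v` contributes `(ν (L v), ν (R v), color v)`, the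
vertices being listed with non-increasing valencies (descendants first among equal
valencies). -/
def BT.rmword : BT → List (ℕ × ℕ × Bool)
  | BT.leaf _ => []
  | BT.node c l r => mergeByNu l.rmword r.rmword ++ [(l.nu, r.nu, c)]

/-- The word of labels of the saturated chain `c(F)` associated to a forest `F`, read along
the reverse-minimal linear extension of the internal vertices of `F`. -/
noncomputable def forestWord (F : Finset BT) : List (ℕ × ℕ × Bool) :=
  (F.toList.map BT.rmword).foldr mergeByNu []

/-- `TLyn_{n,p}^•`: pointed Lyndon trees on `[n]` whose associated chain ends at `[n]^p`,
i.e. whose tracked pointed element is `p`. -/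
abbrev TLynBullet (n p : ℕ) : Type :=
  {T : BT // T.normalized ∧ T.pLyn ∧ T.leaves = Finset.Icc 1 n ∧ T.ppt = p}

/-- The labeling `λ̃` of `Πₙ•` proposed by Bellier-Millès, Delcroix-Oger and Hoffbeck:
the cover `u`-merging blocks with minima `a < b` in a pointed partition `π` with `|π|`
blocks is labeled `(b, a + n - |π|)` if `u = 0` and `(b, b + n - |π|)` if `u = 1`. -/
noncomputable def labT (n : ℕ) {A : Finset ℕ} (π π' : PPart A) : ℕ × ℕ :=
  let olds := π.1 \ π'.1
  let mins := olds.image fun b => minB b.1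
  let a := mins.min.untopD 0
  let b := mins.max.unbotD 0
  if ∃ c ∈ olds, minB c.1 = a ∧ ∃ d ∈ π'.1 \ π.1, d.2 = c.2
  then (b, b + n - π.1.card)
  else (b, a + n - π.1.card)

/-- The (strict) lexicographic order on `ℕ × ℕ`. -/
def ltT (x y : ℕ × ℕ) : Prop := x.1 < y.1 ∨ (x.1 = y.1 ∧ x.2 < y.2)


section UFAux

variable {A : Finset ℕ}

lemma minB_eq_min' {B : Finset ℕ} (h : B.Nonempty) : minB B = B.min' h := by
  rw [minB, ← Finset.coe_min' h]; rfl

lemma minB_mem {B : Finset ℕ} (h : B.Nonempty) : minB B ∈ B := by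
  rw [minB_eq_min' h]; exact B.min'_mem h

lemma minB_le {B : Finset ℕ} {y : ℕ} (hy : y ∈ B) : minB B ≤ y := by
  rw [minB_eq_min' ⟨y, hy⟩]; exact Finset.min'_le _ _ hy

lemma minB_eq_of {B : Finset ℕ} {y : ℕ} (hy : y ∈ B) (h : ∀ x ∈ B, y ≤ x) : minB B = y :=
  le_antisymm (minB_le hy) (by rw [minB_eq_min' ⟨y, hy⟩]; exact Finset.le_min' _ _ _ h)

lemma pt_mem (π : PPart A) {b} (hb : b ∈ π.1) : b.2 ∈ b.1 := π.2.1 b hb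

lemma blk_nonempty (π : PPart A) {b} (hb : b ∈ π.1) : b.1.Nonempty := ⟨b.2, π.2.1 b hb⟩

lemma blk_eq_of_mem (π : PPart A) {b b'} (hb : b ∈ π.1) (hb' : b' ∈ π.1) {x : ℕ}
    (hx : x ∈ b.1) (hx' : x ∈ b'.1) : b = b' := by
  by_contra hne
  exact (Finset.disjoint_left.mp (π.2.2.1 b hb b' hb' hne) hx) hx'

lemma blk_sub_A (π : PPart A) {b} (hb : b ∈ π.1) : b.1 ⊆ A := by
  rw [← π.2.2.2]
  exact Finset.subset_biUnion_of_mem Prod.fst hb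

lemma exists_blk (π : PPart A) {x} (hx : x ∈ A) : ∃ b ∈ π.1, x ∈ b.1 := by
  rw [← π.2.2.2] at hx
  simpa using hx

lemma blk_minB_inj (π : PPart A) {b b'} (hb : b ∈ π.1) (hb' : b' ∈ π.1)
    (h : minB b.1 = minB b'.1) : b = b' :=
  blk_eq_of_mem π hb hb' (minB_mem (blk_nonempty π hb)) (h ▸ minB_mem (blk_nonempty π hb'))

/-! ### cover basics -/

lemma merged_not_mem (π : PPart A) {b1 b2 : Finset ℕ × ℕ} {p : ℕ} (hb1 : b1 ∈ π.1)
    (hb2 : b2 ∈ π.1) (hne : b1 ≠ b2) : (b1.1 ∪ b2.1, p) ∉ π.1 := by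
  intro hm
  have h1 : b1.2 ∈ (b1.1 ∪ b2.1, p).1 := Finset.mem_union_left _ (pt_mem π hb1)
  have hmb1 : (b1.1 ∪ b2.1, p) = b1 := blk_eq_of_mem π hm hb1 h1 (pt_mem π hb1)
  have hsub : b2.1 ⊆ b1.1 := by
    have : b1.1 ∪ b2.1 = b1.1 := congrArg Prod.fst hmb1
    rw [← this]; exact Finset.subset_union_right
  exact hne (blk_eq_of_mem π hb1 hb2 (hsub (pt_mem π hb2)) (pt_mem π hb2))

lemma cov_mem_iff {π π' : PPart A} {b1 b2 : Finset ℕ × ℕ} {p : ℕ}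
    (heq : π'.1 = insert (b1.1 ∪ b2.1, p) ((π.1.erase b1).erase b2)) :
    ∀ x, x ∈ π'.1 ↔ x = (b1.1 ∪ b2.1, p) ∨ (x ∈ π.1 ∧ x ≠ b1 ∧ x ≠ b2) := by
  intro x
  rw [heq]
  simp only [Finset.mem_insert, Finset.mem_erase]
  tauto

lemma cov_diff {π π' : PPart A} {b1 b2 : Finset ℕ × ℕ} {p : ℕ}
    (hb1 : b1 ∈ π.1) (hb2 : b2 ∈ π.1) (hlt : minB b1.1 < minB b2.1)
    (heq : π'.1 = insert (b1.1 ∪ b2.1, p) ((π.1.erase b1).erase b2)) :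
    π.1 \ π'.1 = {b1, b2} ∧ π'.1 \ π.1 = {(b1.1 ∪ b2.1, p)} := by
  have hne : b1 ≠ b2 := fun h => absurd hlt (by rw [h]; exact lt_irrefl _)
  have hm := merged_not_mem π hb1 hb2 hne (p := p)
  have hiff := cov_mem_iff heq
  constructor
  · ext x
    simp only [Finset.mem_sdiff, hiff, Finset.mem_insert, Finset.mem_singleton]
    constructor
    · rintro ⟨hx, hx'⟩
      by_contra hc
      push_neg at hc
      exact hx' (Or.inr ⟨hx, hc.1, hc.2⟩)
    · rintro (rfl | rfl)
      · exact ⟨hb1, by rintro (h | ⟨-, h, -⟩) <;> [exact hm (h ▸ hb1); exact h rfl]⟩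
      · exact ⟨hb2, by rintro (h | ⟨-, -, h⟩) <;> [exact hm (h ▸ hb2); exact h rfl]⟩
  · ext x
    simp only [Finset.mem_sdiff, hiff, Finset.mem_singleton]
    constructor
    · rintro ⟨rfl | ⟨hx, -⟩, hx'⟩
      · rfl
      · exact absurd hx hx'
    · rintro rfl
      exact ⟨Or.inl rfl, hm⟩

lemma pair_min_untop {x y : ℕ} (h : x ≤ y) : ({x, y} : Finset ℕ).min.untopD 0 = x := by
  have : minB {x, y} = x :=
    minB_eq_of (Finset.mem_insert_self _ _) (by
      intro z hz
      rcases Finset.mem_insert.1 hz with rfl | hz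
      · exact le_rfl
      · rw [Finset.mem_singleton.1 hz]; exact h)
  exact this

lemma pair_max_unbot {x y : ℕ} (h : x ≤ y) : ({x, y} : Finset ℕ).max.unbotD 0 = y := by
  have h1 : ({x, y} : Finset ℕ).Nonempty := ⟨x, Finset.mem_insert_self _ _⟩
  have h2 : ({x, y} : Finset ℕ).max' h1 = y := by
    apply le_antisymm
    · apply Finset.max'_le
      intro z hz
      rcases Finset.mem_insert.1 hz with rfl | hz
      · exact h
      · rw [Finset.mem_singleton.1 hz]
    · exact Finset.le_max' _ _ (by simp)
  rw [← Finset.coe_max' h1, h2]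
  rfl

lemma labPP_eq {π π' : PPart A} {b1 b2 : Finset ℕ × ℕ} {p : ℕ}
    (hb1 : b1 ∈ π.1) (hb2 : b2 ∈ π.1) (hlt : minB b1.1 < minB b2.1)
    (heq : π'.1 = insert (b1.1 ∪ b2.1, p) ((π.1.erase b1).erase b2)) :
    labPP π π' = (minB b1.1, minB b2.1, if p = b1.2 then true else false) := by
  obtain ⟨hold, hnew⟩ := cov_diff hb1 hb2 hlt heq
  have hne12 : b1.2 ≠ b2.2 := by
    intro h
    exact absurd hlt (by
      rw [blk_eq_of_mem π hb1 hb2 (pt_mem π hb1) (h ▸ pt_mem π hb2)]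
      exact lt_irrefl _)
  have himg : ({b1, b2} : Finset (Finset ℕ × ℕ)).image (fun b => minB b.1)
      = {minB b1.1, minB b2.1} := by
    rw [Finset.image_insert, Finset.image_singleton]
  have hminv : (({b1, b2} : Finset (Finset ℕ × ℕ)).image (fun b => minB b.1)).min.untopD 0
      = minB b1.1 := by rw [himg]; exact pair_min_untop hlt.le
  have hcond : (∃ b ∈ ({b1, b2} : Finset (Finset ℕ × ℕ)), minB b.1 = minB b1.1 ∧
      ∃ d ∈ ({(b1.1 ∪ b2.1, p)} : Finset (Finset ℕ × ℕ)), d.2 = b.2) ↔ p = b1.2 := by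
    constructor
    · rintro ⟨b, hb, hbmin, d, hd, hdb⟩
      rw [Finset.mem_singleton] at hd
      subst hd
      rcases Finset.mem_insert.1 hb with rfl | hb
      · exact hdb
      · rw [Finset.mem_singleton.1 hb] at hbmin
        exact absurd hbmin hlt.ne'
    · intro h
      exact ⟨b1, Finset.mem_insert_self _ _, rfl, (b1.1 ∪ b2.1, p), Finset.mem_singleton_self _, h⟩
  rw [labPP]
  simp only [hold, hnew, himg, hminv]
  rw [pair_min_untop hlt.le, pair_max_unbot hlt.le]
  congr 1
  congr 1
  rw [if_congr hcond rfl rfl]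

end UFAux

section UFCoarse

variable {A : Finset ℕ}

/-- `π` is a coarsening of `a` with compatible pointing. -/
def Coarse {A : Finset ℕ} (a π : PPart A) : Prop :=
  (∀ c ∈ a.1, ∃ b ∈ π.1, c.1 ⊆ b.1) ∧
  (∀ b ∈ π.1, ∃ c ∈ a.1, c.1 ⊆ b.1 ∧ b.2 = c.2)

lemma coarse_refl (a : PPart A) : Coarse a a :=
  ⟨fun c hc => ⟨c, hc, subset_rfl⟩, fun b hb => ⟨b, hb, subset_rfl, rfl⟩⟩

lemma Coarse.sub_of_mem {a π : PPart A} (h : Coarse a π) {c b} (hc : c ∈ a.1) (hb : b ∈ π.1)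
    {x} (hx : x ∈ c.1) (hxb : x ∈ b.1) : c.1 ⊆ b.1 := by
  obtain ⟨b', hb', hcb'⟩ := h.1 c hc
  rwa [blk_eq_of_mem π hb' hb (hcb' hx) hxb] at hcb'

lemma Coarse.cov {a π π' : PPart A} (h : Coarse a π) (hcov : covPP π π') : Coarse a π' := by
  obtain ⟨b1, hb1, b2, hb2, hlt, p, hp, heq⟩ := hcov
  have hiff := cov_mem_iff heq
  constructor
  · intro c hc
    obtain ⟨b, hb, hcb⟩ := h.1 c hc
    by_cases h1 : b = b1
    · exact ⟨(b1.1 ∪ b2.1, p), (hiff _).2 (Or.inl rfl),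
        (h1 ▸ hcb).trans Finset.subset_union_left⟩
    by_cases h2 : b = b2
    · exact ⟨(b1.1 ∪ b2.1, p), (hiff _).2 (Or.inl rfl),
        (h2 ▸ hcb).trans Finset.subset_union_right⟩
    exact ⟨b, (hiff _).2 (Or.inr ⟨hb, h1, h2⟩), hcb⟩
  · intro b hb
    rcases (hiff b).1 hb with rfl | ⟨hb', -, -⟩
    · rcases hp with rfl | rfl
      · obtain ⟨c, hc, hcb, hpt⟩ := h.2 b1 hb1
        exact ⟨c, hc, hcb.trans Finset.subset_union_left, hpt⟩
      · obtain ⟨c, hc, hcb, hpt⟩ := h.2 b2 hb2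
        exact ⟨c, hc, hcb.trans Finset.subset_union_right, hpt⟩
    · exact h.2 b hb'

lemma coarse_of_rtg {a π π' : PPart A} (h : Coarse a π)
    (hr : Relation.ReflTransGen covPP π π') : Coarse a π' := by
  induction hr with
  | refl => exact h
  | tail _ h2 ih => exact ih.cov h2

lemma coarse_of_le {a π : PPart A} (h : leOf covPP a π) : Coarse a π :=
  coarse_of_rtg (coarse_refl a) h

lemma coarse_card {a π : PPart A} (h : Coarse a π) : π.1.card ≤ a.1.card := by
  classical
  set f : Finset ℕ × ℕ → Finset ℕ × ℕ := fun b =>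
    if hb : ∃ c ∈ a.1, c.1 ⊆ b.1 ∧ b.2 = c.2 then hb.choose else b with hf
  have hfa : ∀ b ∈ π.1, f b ∈ a.1 ∧ (f b).1 ⊆ b.1 := by
    intro b hb
    have hex := h.2 b hb
    rw [hf]
    simp only [dif_pos hex]
    exact ⟨hex.choose_spec.1, hex.choose_spec.2.1⟩
  apply Finset.card_le_card_of_injOn f (fun b hb => (hfa b hb).1)
  intro b hb b' hb' hbb
  obtain ⟨hfa1, hfs1⟩ := hfa b hb
  obtain ⟨hfa2, hfs2⟩ := hfa b' hb'
  have hx : (f b).2 ∈ (f b).1 := a.2.1 _ hfa1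
  exact blk_eq_of_mem π hb hb' (hfs1 hx) (hfs2 (hbb ▸ hx))

lemma coarse_all_eq {a π : PPart A} (hco : Coarse a π) (hall : ∀ b ∈ π.1, b ∈ a.1) :
    π = a := by
  apply Subtype.ext
  apply Finset.Subset.antisymm (fun b hb => hall b hb)
  intro c hc
  obtain ⟨b, hb, hcb⟩ := hco.1 c hc
  have hba := hall b hb
  have : c = b := by
    by_contra hne
    exact Finset.disjoint_left.mp (a.2.2.1 c hc b hba hne) (a.2.1 c hc) (hcb (a.2.1 c hc))
  exact this ▸ hb

lemma coarse_split {a π : PPart A} (hco : Coarse a π) {b} (hb : b ∈ π.1) (hbna : b ∉ a.1) :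
    ∃ π₀ : PPart A, Coarse a π₀ ∧ covPP π₀ π ∧ π₀.1.card = π.1.card + 1 := by
  obtain ⟨c, hca, hcb, hpt⟩ := hco.2 b hb
  have hcne : c.1 ≠ b.1 := by
    intro h
    have hbc : b = c := Prod.ext h.symm hpt
    rw [hbc] at hbna
    exact hbna hca
  obtain ⟨x, hxb, hxc⟩ := Finset.exists_of_ssubset (hcb.ssubset_of_ne hcne)
  have hxA : x ∈ A := blk_sub_A π hb hxb
  obtain ⟨c', hc'a, hxc'⟩ := exists_blk a hxA
  have hc'b : c'.1 ⊆ b.1 := hco.sub_of_mem hc'a hb hxc' hxb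
  have hcc' : c ≠ c' := fun h => hxc (h ▸ hxc')
  have hdisj : Disjoint c.1 c'.1 := a.2.2.1 c hca c' hc'a hcc'
  have hc'sub : c'.1 ⊆ b.1 \ c.1 := fun y hy =>
    Finset.mem_sdiff.2 ⟨hc'b hy, fun hyc => Finset.disjoint_left.mp hdisj hyc hy⟩
  set d2 : Finset ℕ × ℕ := (b.1 \ c.1, c'.2) with hd2def
  have hd2pt : d2.2 ∈ d2.1 := hc'sub (a.2.1 c' hc'a)
  have hcnon : c.1.Nonempty := blk_nonempty a hca
  have hcd2 : c ≠ d2 := by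
    intro h
    have : c.2 ∈ b.1 \ c.1 := by
      have := a.2.1 c hca
      rwa [show c.1 = b.1 \ c.1 from congrArg Prod.fst h] at this
    exact (Finset.mem_sdiff.1 this).2 (a.2.1 c hca)
  have hold : ∀ e ∈ π.1.erase b, Disjoint b.1 e.1 := fun e he =>
    π.2.2.1 b hb e (Finset.mem_of_mem_erase he)
      (fun hh => (Finset.mem_erase.1 he).1 hh.symm)
  have hc_not : c ∉ π.1.erase b := fun h =>
    Finset.disjoint_left.mp (hold c h) (hcb (a.2.1 c hca)) (a.2.1 c hca)
  have hd2_not : d2 ∉ π.1.erase b := fun h =>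
    Finset.disjoint_left.mp (hold d2 h) ((Finset.mem_sdiff.1 hd2pt).1) hd2pt
  have hd2c_not : d2 ∉ insert c (π.1.erase b) := by
    simp only [Finset.mem_insert]
    rintro (h | h)
    · exact hcd2 h.symm
    · exact hd2_not h
  have hc_not' : c ∉ insert d2 (π.1.erase b) := by
    simp only [Finset.mem_insert]
    rintro (h | h)
    · exact hcd2 h
    · exact hc_not h
  refine ⟨⟨insert c (insert d2 (π.1.erase b)), ?_, ?_, ?_⟩, ⟨?_, ?_⟩, ?_, ?_⟩
  · intro e he
    rcases Finset.mem_insert.1 he with h | he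
    · rw [h]; exact a.2.1 c hca
    rcases Finset.mem_insert.1 he with h | he
    · rw [h]; exact hd2pt
    · exact π.2.1 e (Finset.mem_of_mem_erase he)
  · intro e he e' he' hne
    have hdcd2 : Disjoint c.1 d2.1 := by
      rw [hd2def]
      exact Finset.disjoint_sdiff
    have hmem : ∀ g, g ∈ insert c (insert d2 (π.1.erase b)) →
        g = c ∨ g = d2 ∨ g ∈ π.1.erase b := by
      intro g hg
      rcases Finset.mem_insert.1 hg with h | hg
      · exact Or.inl h
      rcases Finset.mem_insert.1 hg with h | hg
      · exact Or.inr (Or.inl h)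
      · exact Or.inr (Or.inr hg)
    rcases hmem e he with h1 | h1 | h1 <;> rcases hmem e' he' with h2 | h2 | h2
    · exact absurd (h1.trans h2.symm) hne
    · rw [h1, h2]; exact hdcd2
    · rw [h1]; exact Finset.disjoint_of_subset_left hcb (hold e' h2)
    · rw [h1, h2]; exact hdcd2.symm
    · exact absurd (h1.trans h2.symm) hne
    · rw [h1]; exact Finset.disjoint_of_subset_left (Finset.sdiff_subset) (hold e' h2)
    · rw [h2]; exact (Finset.disjoint_of_subset_left hcb (hold e h1)).symm
    · rw [h2]; exact (Finset.disjoint_of_subset_left (Finset.sdiff_subset) (hold e h1)).symm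
    · exact π.2.2.1 e (Finset.mem_of_mem_erase h1) e' (Finset.mem_of_mem_erase h2) hne
  · ext y
    simp only [Finset.mem_biUnion, Finset.mem_insert]
    constructor
    · rintro ⟨e, (rfl | rfl | he), hy⟩
      · exact blk_sub_A π hb (hcb hy)
      · exact blk_sub_A π hb (Finset.sdiff_subset hy)
      · exact blk_sub_A π (Finset.mem_of_mem_erase he) hy
    · intro hy
      obtain ⟨e, he, hye⟩ := exists_blk π hy
      by_cases heb : e = b
      · subst heb
        by_cases hyc : y ∈ c.1
        · exact ⟨c, Or.inl rfl, hyc⟩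
        · exact ⟨d2, Or.inr (Or.inl rfl), Finset.mem_sdiff.2 ⟨hye, hyc⟩⟩
      · exact ⟨e, Or.inr (Or.inr (Finset.mem_erase.2 ⟨heb, he⟩)), hye⟩
  · -- Coarse cond 1
    intro c'' hc''
    obtain ⟨b'', hb'', hsub⟩ := hco.1 c'' hc''
    by_cases hbb : b'' = b
    · subst hbb
      by_cases hcc : c'' = c
      · exact ⟨c, Finset.mem_insert_self _ _, hcc ▸ subset_rfl⟩
      · refine ⟨d2, Finset.mem_insert.2 (Or.inr (Finset.mem_insert_self _ _)), ?_⟩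
        have hdisj2 : Disjoint c''.1 c.1 := a.2.2.1 c'' hc'' c hca hcc
        exact fun y hy => Finset.mem_sdiff.2 ⟨hsub hy, fun hyc =>
          Finset.disjoint_left.mp hdisj2 hy hyc⟩
    · exact ⟨b'', Finset.mem_insert.2 (Or.inr (Finset.mem_insert.2 (Or.inr
        (Finset.mem_erase.2 ⟨hbb, hb''⟩)))), hsub⟩
  · -- Coarse cond 2
    intro e he
    rcases Finset.mem_insert.1 he with h | he
    · exact ⟨c, hca, by rw [h], by rw [h]⟩
    rcases Finset.mem_insert.1 he with h | he
    · exact ⟨c', hc'a, by rw [h]; exact hc'sub, by rw [h]⟩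
    · exact hco.2 e (Finset.mem_of_mem_erase he)
  · -- cover
    have hmm : minB c.1 ≠ minB d2.1 := by
      intro h
      have h1 := minB_mem hcnon
      have h2 := minB_mem ⟨d2.2, hd2pt⟩
      rw [← h] at h2
      exact (Finset.mem_sdiff.1 h2).2 h1
    have huni : c.1 ∪ d2.1 = b.1 := Finset.union_sdiff_of_subset hcb
    have hek : ((insert c (insert d2 (π.1.erase b))).erase c).erase d2 = π.1.erase b := by
      rw [Finset.erase_insert hc_not', Finset.erase_insert hd2_not]
    have hek2 : ((insert c (insert d2 (π.1.erase b))).erase d2).erase c = π.1.erase b := by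
      rw [Finset.insert_comm, Finset.erase_insert hd2c_not, Finset.erase_insert hc_not]
    rcases lt_or_gt_of_ne hmm with hlt | hgt
    · refine ⟨c, Finset.mem_insert_self _ _, d2,
        Finset.mem_insert.2 (Or.inr (Finset.mem_insert_self _ _)), hlt, b.2, Or.inl hpt, ?_⟩
      rw [hek, huni]
      exact (Finset.insert_erase hb).symm
    · refine ⟨d2, Finset.mem_insert.2 (Or.inr (Finset.mem_insert_self _ _)), c,
        Finset.mem_insert_self _ _, hgt, b.2, Or.inr hpt, ?_⟩
      rw [hek2, Finset.union_comm, huni]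
      exact (Finset.insert_erase hb).symm
  · -- card
    rw [Finset.card_insert_of_notMem hc_not', Finset.card_insert_of_notMem hd2_not,
      Finset.card_erase_of_mem hb]
    have : 1 ≤ π.1.card := Finset.card_pos.2 ⟨b, hb⟩
    omega

lemma le_of_coarse {a π : PPart A} (h : Coarse a π) : leOf covPP a π := by
  have key : ∀ k (π : PPart A), a.1.card - π.1.card ≤ k → Coarse a π →
      Relation.ReflTransGen covPP a π := by
    intro k
    induction k with
    | zero =>
      intro π hk hco
      by_cases hall : ∀ b ∈ π.1, b ∈ a.1
      · rw [coarse_all_eq hco hall]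
      · push_neg at hall
        obtain ⟨b, hb, hbna⟩ := hall
        obtain ⟨π₀, hco₀, -, hcard⟩ := coarse_split hco hb hbna
        have := coarse_card hco₀
        omega
    | succ k ih =>
      intro π hk hco
      by_cases hall : ∀ b ∈ π.1, b ∈ a.1
      · rw [coarse_all_eq hco hall]
      · push_neg at hall
        obtain ⟨b, hb, hbna⟩ := hall
        obtain ⟨π₀, hco₀, hcov, hcard⟩ := coarse_split hco hb hbna
        have hle := coarse_card hco₀
        exact (ih π₀ (by omega) hco₀).tail hcov
  exact key _ π le_rfl h

end UFCoarse

section UFPhi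

variable {A : Finset ℕ}

/-- The block-level map `Φ`. -/
noncomputable def phiB (a : PPart A) (b : Finset ℕ × ℕ) : Finset ℕ × ℕ :=
  ((a.1.filter fun c => c.1 ⊆ b.1).image fun c => minB c.1,
   ((a.1.filter fun c => b.2 ∈ c.1).image fun c => minB c.1).min.untopD 0)

lemma PhiMap_eq (a : PPart A) (pf : Finset (Finset ℕ × ℕ)) :
    PhiMap a.1 pf = pf.image (phiB a) := rfl

/-- The ground set of minima. -/
abbrev Mins (a : PPart A) : Finset ℕ := a.1.image fun b => minB b.1

lemma mem_Mins {a : PPart A} {m : ℕ} : m ∈ Mins a ↔ ∃ c ∈ a.1, minB c.1 = m := by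
  simp [Mins]

/-- The unique block of `a` containing `x`. -/
noncomputable def cblk (a : PPart A) (x : ℕ) : Finset ℕ × ℕ :=
  if h : ∃ c ∈ a.1, x ∈ c.1 then h.choose else (∅, 0)

lemma cblk_spec {a : PPart A} {x : ℕ} (hx : x ∈ A) :
    cblk a x ∈ a.1 ∧ x ∈ (cblk a x).1 := by
  have h := exists_blk a hx
  rw [cblk, dif_pos h]
  exact ⟨h.choose_spec.1, h.choose_spec.2⟩

lemma cblk_eq {a : PPart A} {c : Finset ℕ × ℕ} {x : ℕ} (hc : c ∈ a.1) (hx : x ∈ c.1) :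
    cblk a x = c := by
  have hxA : x ∈ A := blk_sub_A a hc hx
  exact blk_eq_of_mem a (cblk_spec hxA).1 hc (cblk_spec hxA).2 hx

lemma cblk_minB {a : PPart A} {m : ℕ} (hm : m ∈ Mins a) :
    cblk a m ∈ a.1 ∧ minB (cblk a m).1 = m := by
  obtain ⟨c, hc, rfl⟩ := mem_Mins.1 hm
  rw [cblk_eq hc (minB_mem (blk_nonempty a hc))]
  exact ⟨hc, rfl⟩

lemma Mins_sub {a : PPart A} : (Mins a : Finset ℕ) ⊆ A := by
  intro m hm
  obtain ⟨c, hc, rfl⟩ := mem_Mins.1 hm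
  exact blk_sub_A a hc (minB_mem (blk_nonempty a hc))

lemma filter_mem_eq {a : PPart A} {x : ℕ} (hx : x ∈ A) :
    a.1.filter (fun c => x ∈ c.1) = {cblk a x} := by
  ext c
  simp only [Finset.mem_filter, Finset.mem_singleton]
  constructor
  · rintro ⟨hc, hxc⟩
    exact (cblk_eq hc hxc).symm
  · rintro rfl
    exact ⟨(cblk_spec hx).1, (cblk_spec hx).2⟩

lemma phiB_snd {a : PPart A} {b : Finset ℕ × ℕ} (hx : b.2 ∈ A) :
    (phiB a b).2 = minB (cblk a b.2).1 := by
  rw [phiB]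
  simp only [filter_mem_eq hx, Finset.image_singleton, Finset.min_singleton]
  rfl

lemma mem_phiB_fst {a : PPart A} {b : Finset ℕ × ℕ} {m : ℕ} :
    m ∈ (phiB a b).1 ↔ ∃ c ∈ a.1, c.1 ⊆ b.1 ∧ minB c.1 = m := by
  simp [phiB, and_assoc]

lemma minB_mem_phiB {a π : PPart A} (hco : Coarse a π) {b} (hb : b ∈ π.1) :
    minB b.1 ∈ (phiB a b).1 := by
  have hbne := blk_nonempty π hb
  have hmem : minB b.1 ∈ b.1 := minB_mem hbne
  have hA : minB b.1 ∈ A := blk_sub_A π hb hmem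
  have hc := cblk_spec (a := a) hA
  have hsub : (cblk a (minB b.1)).1 ⊆ b.1 := hco.sub_of_mem hc.1 hb hc.2 hmem
  refine mem_phiB_fst.2 ⟨cblk a (minB b.1), hc.1, hsub, ?_⟩
  apply le_antisymm (minB_le hc.2)
  exact minB_le (hsub (minB_mem (blk_nonempty a hc.1)))

lemma minB_phiB {a π : PPart A} (hco : Coarse a π) {b} (hb : b ∈ π.1) :
    minB (phiB a b).1 = minB b.1 := by
  apply minB_eq_of (minB_mem_phiB hco hb)
  intro m hm
  obtain ⟨c, hc, hsub, rfl⟩ := mem_phiB_fst.1 hm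
  exact minB_le (hsub (minB_mem (blk_nonempty a hc)))

lemma cblk_pt {a π : PPart A} (hco : Coarse a π) {b} (hb : b ∈ π.1) :
    cblk a b.2 ∈ a.1 ∧ (cblk a b.2).1 ⊆ b.1 ∧ b.2 = (cblk a b.2).2 := by
  obtain ⟨c, hc, hsub, hpt⟩ := hco.2 b hb
  have : cblk a b.2 = c := cblk_eq hc (by rw [hpt]; exact a.2.1 c hc)
  rw [this]
  exact ⟨hc, hsub, hpt⟩

/-- The block-level map `Ψ`. -/
noncomputable def psiB (a : PPart A) (s : Finset ℕ × ℕ) : Finset ℕ × ℕ :=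
  ((a.1.filter fun c => minB c.1 ∈ s.1).biUnion Prod.fst,
   ((a.1.filter fun c => minB c.1 = s.2).image Prod.snd).min.untopD 0)

lemma mem_psiB_fst {a : PPart A} {s : Finset ℕ × ℕ} {x : ℕ} :
    x ∈ (psiB a s).1 ↔ ∃ c ∈ a.1, minB c.1 ∈ s.1 ∧ x ∈ c.1 := by
  simp [psiB, and_assoc]

lemma filter_minB_eq {a : PPart A} {m : ℕ} (hm : m ∈ Mins a) :
    a.1.filter (fun c => minB c.1 = m) = {cblk a m} := by
  obtain ⟨hmem, hminB⟩ := cblk_minB hm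
  ext c
  simp only [Finset.mem_filter, Finset.mem_singleton]
  constructor
  · rintro ⟨hc, hmc⟩
    exact blk_minB_inj a hc hmem (by rw [hmc, hminB])
  · rintro rfl
    exact ⟨hmem, hminB⟩

lemma psiB_snd {a : PPart A} {s : Finset ℕ × ℕ} (hm : s.2 ∈ Mins a) :
    (psiB a s).2 = (cblk a s.2).2 := by
  rw [psiB]
  simp only [filter_minB_eq hm, Finset.image_singleton, Finset.min_singleton]
  rfl

lemma psiB_phiB {a π : PPart A} (hco : Coarse a π) {b} (hb : b ∈ π.1) :
    psiB a (phiB a b) = b := by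
  have hbA : b.2 ∈ A := blk_sub_A π hb (pt_mem π hb)
  obtain ⟨hcm, hcsub, hcpt⟩ := cblk_pt hco hb
  apply Prod.ext
  · ext x
    rw [mem_psiB_fst]
    constructor
    · rintro ⟨c, hc, hcmem, hxc⟩
      obtain ⟨c', hc', hsub', hmin'⟩ := mem_phiB_fst.1 hcmem
      have : c' = c := blk_minB_inj a hc' hc hmin'
      subst this
      exact hsub' hxc
    · intro hx
      have hxA : x ∈ A := blk_sub_A π hb hx
      have hc := cblk_spec (a := a) hxA
      have hsub : (cblk a x).1 ⊆ b.1 := hco.sub_of_mem hc.1 hb hc.2 hx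
      exact ⟨cblk a x, hc.1, mem_phiB_fst.2 ⟨cblk a x, hc.1, hsub, rfl⟩, hc.2⟩
  · have h2 : (phiB a b).2 = minB (cblk a b.2).1 := phiB_snd hbA
    have hm : (phiB a b).2 ∈ Mins a := by
      rw [h2]; exact mem_Mins.2 ⟨cblk a b.2, hcm, rfl⟩
    rw [psiB_snd hm, h2, cblk_eq hcm (minB_mem (blk_nonempty a hcm)), ← hcpt]

lemma blk_sub_Mins {a : PPart A} (ρ : PPart (Mins a)) {s} (hs : s ∈ ρ.1) :
    s.1 ⊆ Mins a := blk_sub_A ρ hs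

lemma phiB_psiB {a : PPart A} (ρ : PPart (Mins a)) {s} (hs : s ∈ ρ.1) :
    phiB a (psiB a s) = s := by
  have hs2 : s.2 ∈ Mins a := blk_sub_Mins ρ hs (pt_mem ρ hs)
  apply Prod.ext
  · ext m
    rw [mem_phiB_fst]
    constructor
    · rintro ⟨c, hc, hsub, rfl⟩
      have : minB c.1 ∈ (psiB a s).1 := hsub (minB_mem (blk_nonempty a hc))
      obtain ⟨c', hc', hmem', hin'⟩ := mem_psiB_fst.1 this
      have : c = c' := blk_eq_of_mem a hc hc' (minB_mem (blk_nonempty a hc)) hin'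
      rw [this]
      exact hmem'
    · intro hm
      have hmM : m ∈ Mins a := blk_sub_Mins ρ hs hm
      obtain ⟨hcm, hminB⟩ := cblk_minB hmM
      refine ⟨cblk a m, hcm, ?_, hminB⟩
      intro x hx
      exact mem_psiB_fst.2 ⟨cblk a m, hcm, by rw [hminB]; exact hm, hx⟩
  · obtain ⟨hcm, hminB⟩ := cblk_minB hs2
    have hpA : (psiB a s).2 ∈ A := by
      rw [psiB_snd hs2]
      exact blk_sub_A a hcm (a.2.1 _ hcm)
    rw [phiB_snd hpA, psiB_snd hs2, cblk_eq hcm (a.2.1 _ hcm), hminB]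

end UFPhi

section UFTrans

variable {A : Finset ℕ}

lemma phiB_injOn {a π : PPart A} (hco : Coarse a π) {b b'} (hb : b ∈ π.1) (hb' : b' ∈ π.1)
    (h : phiB a b = phiB a b') : b = b' := by
  rw [← psiB_phiB hco hb, ← psiB_phiB hco hb', h]

/-- `Φ` on pointed partitions. -/
noncomputable def PhiP (a : PPart A) (π : PPart A) (hco : Coarse a π) : PPart (Mins a) := by
  refine ⟨π.1.image (phiB a), ?_, ?_, ?_⟩
  · intro B hB
    obtain ⟨b, hb, rfl⟩ := Finset.mem_image.1 hB
    have h2 : (phiB a b).2 = minB (cblk a b.2).1 := phiB_snd (blk_sub_A π hb (pt_mem π hb))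
    obtain ⟨hcm, hcsub, _⟩ := cblk_pt hco hb
    rw [h2]
    exact mem_phiB_fst.2 ⟨cblk a b.2, hcm, hcsub, rfl⟩
  · intro B hB B' hB' hne
    obtain ⟨b, hb, rfl⟩ := Finset.mem_image.1 hB
    obtain ⟨b', hb', rfl⟩ := Finset.mem_image.1 hB'
    have hbb : b ≠ b' := fun h => hne (by rw [h])
    rw [Finset.disjoint_left]
    intro m hm hm'
    obtain ⟨c, hc, hsub, rfl⟩ := mem_phiB_fst.1 hm
    obtain ⟨c', hc', hsub', heq⟩ := mem_phiB_fst.1 hm'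
    have : c' = c := blk_minB_inj a hc' hc heq
    subst this
    have hx := minB_mem (blk_nonempty a hc)
    exact hbb (blk_eq_of_mem π hb hb' (hsub hx) (hsub' hx))
  · ext m
    simp only [Finset.mem_biUnion, Finset.mem_image]
    constructor
    · rintro ⟨B, ⟨b, hb, rfl⟩, hm⟩
      obtain ⟨c, hc, -, rfl⟩ := mem_phiB_fst.1 hm
      exact ⟨c, hc, rfl⟩
    · intro hm
      obtain ⟨c, hc, rfl⟩ := hm
      obtain ⟨b, hb, hsub⟩ := hco.1 c hc
      exact ⟨phiB a b, ⟨b, hb, rfl⟩, mem_phiB_fst.2 ⟨c, hc, hsub, rfl⟩⟩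

/-- `Ψ` on pointed partitions. -/
noncomputable def PsiP (a : PPart A) (ρ : PPart (Mins a)) : PPart A := by
  refine ⟨ρ.1.image (psiB a), ?_, ?_, ?_⟩
  · intro B hB
    obtain ⟨s, hs, rfl⟩ := Finset.mem_image.1 hB
    have hs2 : s.2 ∈ Mins a := blk_sub_Mins ρ hs (pt_mem ρ hs)
    obtain ⟨hcm, hminB⟩ := cblk_minB hs2
    rw [psiB_snd hs2]
    exact mem_psiB_fst.2 ⟨cblk a s.2, hcm, by rw [hminB]; exact pt_mem ρ hs, a.2.1 _ hcm⟩
  · intro B hB B' hB' hne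
    obtain ⟨s, hs, rfl⟩ := Finset.mem_image.1 hB
    obtain ⟨s', hs', rfl⟩ := Finset.mem_image.1 hB'
    have hss : s ≠ s' := fun h => hne (by rw [h])
    rw [Finset.disjoint_left]
    intro x hx hx'
    obtain ⟨c, hc, hmem, hxc⟩ := mem_psiB_fst.1 hx
    obtain ⟨c', hc', hmem', hxc'⟩ := mem_psiB_fst.1 hx'
    have : c = c' := blk_eq_of_mem a hc hc' hxc hxc'
    subst this
    exact Finset.disjoint_left.mp (ρ.2.2.1 s hs s' hs' hss) hmem hmem'
  · ext x
    simp only [Finset.mem_biUnion, Finset.mem_image]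
    constructor
    · rintro ⟨B, ⟨s, hs, rfl⟩, hx⟩
      obtain ⟨c, hc, -, hxc⟩ := mem_psiB_fst.1 hx
      exact blk_sub_A a hc hxc
    · intro hx
      have hc := cblk_spec (a := a) hx
      have hm : minB (cblk a x).1 ∈ Mins a := mem_Mins.2 ⟨cblk a x, hc.1, rfl⟩
      obtain ⟨s, hs, hms⟩ := exists_blk ρ hm
      exact ⟨psiB a s, ⟨s, hs, rfl⟩, mem_psiB_fst.2 ⟨cblk a x, hc.1, hms, hc.2⟩⟩

lemma coarse_PsiP (a : PPart A) (ρ : PPart (Mins a)) : Coarse a (PsiP a ρ) := by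
  constructor
  · intro c hc
    have hm : minB c.1 ∈ Mins a := mem_Mins.2 ⟨c, hc, rfl⟩
    obtain ⟨s, hs, hms⟩ := exists_blk ρ hm
    refine ⟨psiB a s, Finset.mem_image.2 ⟨s, hs, rfl⟩, ?_⟩
    intro x hx
    exact mem_psiB_fst.2 ⟨c, hc, hms, hx⟩
  · intro B hB
    obtain ⟨s, hs, rfl⟩ := Finset.mem_image.1 hB
    have hs2 : s.2 ∈ Mins a := blk_sub_Mins ρ hs (pt_mem ρ hs)
    obtain ⟨hcm, hminB⟩ := cblk_minB hs2
    refine ⟨cblk a s.2, hcm, ?_, psiB_snd hs2⟩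
    intro x hx
    exact mem_psiB_fst.2 ⟨cblk a s.2, hcm, by rw [hminB]; exact pt_mem ρ hs, hx⟩

lemma PsiP_PhiP {a π : PPart A} (hco : Coarse a π) : PsiP a (PhiP a π hco) = π := by
  apply Subtype.ext
  show ((π.1.image (phiB a)).image (psiB a)) = π.1
  rw [Finset.image_image]
  have : ∀ b ∈ π.1, (psiB a ∘ phiB a) b = id b := fun b hb => psiB_phiB hco hb
  rw [Finset.image_congr this, Finset.image_id]

lemma PhiP_PsiP (a : PPart A) (ρ : PPart (Mins a)) :
    PhiP a (PsiP a ρ) (coarse_PsiP a ρ) = ρ := by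
  apply Subtype.ext
  show ((ρ.1.image (psiB a)).image (phiB a)) = ρ.1
  rw [Finset.image_image]
  have : ∀ s ∈ ρ.1, (phiB a ∘ psiB a) s = id s := fun s hs => phiB_psiB ρ hs
  rw [Finset.image_congr this, Finset.image_id]

lemma image_erase_erase {X Y : Type*} [DecidableEq X] [DecidableEq Y] {f : X → Y}
    {s : Finset X} (hf : ∀ x ∈ s, ∀ y ∈ s, f x = f y → x = y)
    {b1 b2 : X} (hb1 : b1 ∈ s) (hb2 : b2 ∈ s) :
    ((s.erase b1).erase b2).image f = ((s.image f).erase (f b1)).erase (f b2) := by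
  ext y
  simp only [Finset.mem_image, Finset.mem_erase]
  constructor
  · rintro ⟨x, ⟨hx2, hx1, hx⟩, rfl⟩
    exact ⟨fun h => hx2 (hf x hx b2 hb2 h), fun h => hx1 (hf x hx b1 hb1 h), x, hx, rfl⟩
  · rintro ⟨h2, h1, x, hx, rfl⟩
    exact ⟨x, ⟨fun h => h2 (by rw [h]), fun h => h1 (by rw [h]), hx⟩, rfl⟩

end UFTrans

section UFCov

variable {A : Finset ℕ}

lemma cov_phi {a π π' : PPart A} (hco : Coarse a π) (hcov : covPP π π') :
    covPP (PhiP a π hco) (PhiP a π' (hco.cov hcov)) ∧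
    labPP (PhiP a π hco) (PhiP a π' (hco.cov hcov)) = labPP π π' := by
  obtain ⟨b1, hb1, b2, hb2, hlt, p, hp, heq⟩ := hcov
  have hne12 : b1 ≠ b2 := fun h => absurd hlt (by rw [h]; exact lt_irrefl _)
  have hpA : p ∈ A := by
    rcases hp with rfl | rfl
    · exact blk_sub_A π hb1 (pt_mem π hb1)
    · exact blk_sub_A π hb2 (pt_mem π hb2)
  set P : ℕ := minB (cblk a p).1 with hP
  have hmerged : phiB a (b1.1 ∪ b2.1, p) = ((phiB a b1).1 ∪ (phiB a b2).1, P) := by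
    apply Prod.ext
    · ext m
      show m ∈ (phiB a (b1.1 ∪ b2.1, p)).1 ↔ _
      rw [mem_phiB_fst]
      simp only [Finset.mem_union]
      constructor
      · rintro ⟨c, hc, hsub, rfl⟩
        have hy := minB_mem (blk_nonempty a hc)
        rcases Finset.mem_union.1 (hsub hy) with hy1 | hy2
        · exact Or.inl (mem_phiB_fst.2 ⟨c, hc, hco.sub_of_mem hc hb1 hy hy1, rfl⟩)
        · exact Or.inr (mem_phiB_fst.2 ⟨c, hc, hco.sub_of_mem hc hb2 hy hy2, rfl⟩)
      · rintro (hm | hm)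
        · obtain ⟨c, hc, hsub, rfl⟩ := mem_phiB_fst.1 hm
          exact ⟨c, hc, hsub.trans Finset.subset_union_left, rfl⟩
        · obtain ⟨c, hc, hsub, rfl⟩ := mem_phiB_fst.1 hm
          exact ⟨c, hc, hsub.trans Finset.subset_union_right, rfl⟩
    · exact phiB_snd hpA
  have hPor : P = (phiB a b1).2 ∨ P = (phiB a b2).2 := by
    rcases hp with rfl | rfl
    · exact Or.inl (phiB_snd (blk_sub_A π hb1 (pt_mem π hb1))).symm
    · exact Or.inr (phiB_snd (blk_sub_A π hb2 (pt_mem π hb2))).symm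
  have hlt' : minB (phiB a b1).1 < minB (phiB a b2).1 := by
    rwa [minB_phiB hco hb1, minB_phiB hco hb2]
  have hmem1 : phiB a b1 ∈ (PhiP a π hco).1 := Finset.mem_image.2 ⟨b1, hb1, rfl⟩
  have hmem2 : phiB a b2 ∈ (PhiP a π hco).1 := Finset.mem_image.2 ⟨b2, hb2, rfl⟩
  have heq' : (PhiP a π' (hco.cov ⟨b1, hb1, b2, hb2, hlt, p, hp, heq⟩)).1 =
      insert ((phiB a b1).1 ∪ (phiB a b2).1, P)
        (((PhiP a π hco).1.erase (phiB a b1)).erase (phiB a b2)) := by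
    show π'.1.image (phiB a) = _
    rw [heq, Finset.image_insert, hmerged,
      image_erase_erase (fun x hx y hy h => phiB_injOn hco hx hy h) hb1 hb2]
    rfl
  have hcov' : covPP (PhiP a π hco) (PhiP a π' (hco.cov ⟨b1, hb1, b2, hb2, hlt, p, hp, heq⟩)) :=
    ⟨phiB a b1, hmem1, phiB a b2, hmem2, hlt', P, hPor, heq'⟩
  refine ⟨hcov', ?_⟩
  have hiff : (P = (phiB a b1).2) ↔ (p = b1.2) := by
    have hb1A : b1.2 ∈ A := blk_sub_A π hb1 (pt_mem π hb1)
    rw [phiB_snd hb1A, hP]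
    constructor
    · intro h
      have hceq : cblk a p = cblk a b1.2 :=
        blk_minB_inj a (cblk_spec hpA).1 (cblk_spec hb1A).1 h
      rcases hp with rfl | rfl
      · rfl
      · exfalso
        have h1 : b1.2 ∈ (cblk a b1.2).1 := (cblk_spec hb1A).2
        have h2 : b2.2 ∈ (cblk a b1.2).1 := hceq ▸ (cblk_spec hpA).2
        have hsub : (cblk a b1.2).1 ⊆ b1.1 :=
          hco.sub_of_mem (cblk_spec hb1A).1 hb1 h1 (pt_mem π hb1)
        exact hne12 (blk_eq_of_mem π hb1 hb2 (hsub h2) (pt_mem π hb2))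
    · intro h
      rw [h]
  rw [labPP_eq hmem1 hmem2 hlt' heq', labPP_eq hb1 hb2 hlt heq,
    minB_phiB hco hb1, minB_phiB hco hb2, if_congr hiff rfl rfl]

set_option maxHeartbeats 1000000 in
lemma minB_psiB {a : PPart A} (ρ : PPart (Mins a)) {s} (hs : s ∈ ρ.1) :
    minB (psiB a s).1 = minB s.1 := by
  have hsne : s.1.Nonempty := blk_nonempty ρ hs
  have hmM : minB s.1 ∈ Mins a := blk_sub_Mins ρ hs (minB_mem hsne)
  obtain ⟨hcm, hminB⟩ := cblk_minB hmM
  apply minB_eq_of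
  · refine mem_psiB_fst.2 ⟨cblk a (minB s.1), hcm, ?_, ?_⟩
    · rw [hminB]; exact minB_mem hsne
    · have h := minB_mem (blk_nonempty a hcm)
      rwa [hminB] at h
  · intro x hx
    obtain ⟨c, hc, hmem, hxc⟩ := mem_psiB_fst.1 hx
    exact (minB_le hmem).trans (minB_le hxc)

lemma cov_psi {a : PPart A} {ρ ρ' : PPart (Mins a)} (hcov : covPP ρ ρ') :
    covPP (PsiP a ρ) (PsiP a ρ') := by
  obtain ⟨s1, hs1, s2, hs2, hlt, q, hq, heq⟩ := hcov
  have hmerged : psiB a (s1.1 ∪ s2.1, q) =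
      ((psiB a s1).1 ∪ (psiB a s2).1, (psiB a (s1.1 ∪ s2.1, q)).2) := by
    apply Prod.ext
    · ext x
      show x ∈ (psiB a (s1.1 ∪ s2.1, q)).1 ↔ _
      rw [mem_psiB_fst]
      simp only [Finset.mem_union, mem_psiB_fst]
      constructor
      · rintro ⟨c, hc, (hm | hm), hxc⟩
        · exact Or.inl ⟨c, hc, hm, hxc⟩
        · exact Or.inr ⟨c, hc, hm, hxc⟩
      · rintro (⟨c, hc, hm, hxc⟩ | ⟨c, hc, hm, hxc⟩)
        · exact ⟨c, hc, Or.inl hm, hxc⟩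
        · exact ⟨c, hc, Or.inr hm, hxc⟩
    · rfl
  have hqor : (psiB a (s1.1 ∪ s2.1, q)).2 = (psiB a s1).2 ∨
      (psiB a (s1.1 ∪ s2.1, q)).2 = (psiB a s2).2 := by
    rcases hq with rfl | rfl
    · exact Or.inl rfl
    · exact Or.inr rfl
  have hlt' : minB (psiB a s1).1 < minB (psiB a s2).1 := by
    rwa [minB_psiB ρ hs1, minB_psiB ρ hs2]
  refine ⟨psiB a s1, Finset.mem_image.2 ⟨s1, hs1, rfl⟩, psiB a s2,
    Finset.mem_image.2 ⟨s2, hs2, rfl⟩, hlt', (psiB a (s1.1 ∪ s2.1, q)).2, hqor, ?_⟩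
  show ρ'.1.image (psiB a) = _
  rw [heq, Finset.image_insert, hmerged,
    image_erase_erase (fun x hx y hy h => by
      rw [← phiB_psiB ρ hx, ← phiB_psiB ρ hy, h]) hs1 hs2]
  rfl

noncomputable def PhiT (a π : PPart A) : PPart (Mins a) :=
  if h : Coarse a π then PhiP a π h else PhiP a a (coarse_refl a)

lemma PhiT_eq {a π : PPart A} (h : Coarse a π) : PhiT a π = PhiP a π h := dif_pos h

lemma rtg_phi {a π π' : PPart A} (hco : Coarse a π)
    (h : Relation.ReflTransGen covPP π π') :
    Relation.ReflTransGen covPP (PhiT a π) (PhiT a π') := by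
  induction h with
  | refl => exact Relation.ReflTransGen.refl
  | tail h1 h2 ih =>
    have hc2 := coarse_of_rtg hco h1
    refine ih.tail ?_
    rw [PhiT_eq hc2, PhiT_eq (hc2.cov h2)]
    exact (cov_phi hc2 h2).1

lemma rtg_psi {a : PPart A} {ρ ρ' : PPart (Mins a)}
    (h : Relation.ReflTransGen covPP ρ ρ') :
    Relation.ReflTransGen covPP (PsiP a ρ) (PsiP a ρ') := by
  induction h with
  | refl => exact Relation.ReflTransGen.refl
  | tail h1 h2 ih => exact ih.tail (cov_psi h2)

end UFCov

/-- For `α ∈ Πₙ•`, the map `Φ` is a poset isomorphism from the principal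
upper filter `U(α)` onto the pointed partition poset on the set of minima of the blocks of
`α`, and it preserves the labeling `λ•` on cover relations. -/
theorem upper_filter_iso_pointed (n : ℕ) (a : PPart (Finset.Icc 1 n)) :
    ∃ e : {π : PPart (Finset.Icc 1 n) // leOf covPP a π} ≃
        PPart (a.1.image fun b => minB b.1),
      (∀ π, (e π).1 = PhiMap a.1 π.1.1) ∧
      (∀ π π', leOf covPP π.1 π'.1 ↔ leOf covPP (e π) (e π')) ∧
      (∀ π π', covPP π.1 π'.1 →
        covPP (e π) (e π') ∧ labPP (e π) (e π') = labPP π.1 π'.1) := by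
  refine ⟨{ toFun := fun π => PhiP a π.1 (coarse_of_le π.2),
            invFun := fun ρ => ⟨PsiP a ρ, le_of_coarse (coarse_PsiP a ρ)⟩,
            left_inv := fun π => Subtype.ext (PsiP_PhiP (coarse_of_le π.2)),
            right_inv := fun ρ => PhiP_PsiP a ρ }, ?_, ?_, ?_⟩
  · intro π
    rfl
  · intro π π'
    constructor
    · intro h
      have h2 := rtg_phi (coarse_of_le π.2) h
      rwa [PhiT_eq (coarse_of_le π.2), PhiT_eq (coarse_of_le π'.2)] at h2
    · intro h
      have h2 := rtg_psi (a := a) h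
      simp only [Equiv.coe_fn_mk] at h2
      rwa [PsiP_PhiP (coarse_of_le π.2), PsiP_PhiP (coarse_of_le π'.2)] at h2
  · intro π π' hcov
    exact cov_phi (coarse_of_le π.2) hcov
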